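/- arXiv:1012.5282 — 3 statements merged into one kernel-verified Lean document; each statement's English description precedes it below -/
import Mathlib

section
/- Let R be a commutative ring, F₁, F₂ ∈ R, and let (P, d_P) and (Q, d_Q) be matrix factorizations of F₁ and F₂ respectively (ℤ/2-graded R-modules with odd endomorphisms squaring to F₁·id and F₂·id). Define d on P ⊗_R Q by d = d_P ⊗ id + σ_P ⊗ d_Q, where σ_P acts on homogeneous p ∈ P by σ_P(p) = (−1)^{deg p} p. Then d² = (F₁ + F₂)·id_{P⊗Q}, i.e., (P ⊗ Q, d) is a matrix factorization of F₁ + F₂. -/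
open TensorProduct

/-- The tensor product of a matrix factorization of `F₁` with a matrix
factorization of `F₂` (with differential `d = d_P ⊗ id + σ_P ⊗ d_Q`, written out on the
graded components) is a matrix factorization of `F₁ + F₂`: `d² = (F₁ + F₂)·id` on each of
the four graded components of `P ⊗ Q`. -/
theorem stmt5 {R P0 P1 Q0 Q1 : Type*} [CommRing R]
    [AddCommGroup P0] [AddCommGroup P1] [AddCommGroup Q0] [AddCommGroup Q1]
    [Module R P0] [Module R P1] [Module R Q0] [Module R Q1]
    (F1 F2 : R)
    (aP : P0 →ₗ[R] P1) (bP : P1 →ₗ[R] P0) (aQ : Q0 →ₗ[R] Q1) (bQ : Q1 →ₗ[R] Q0)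
    (hP1 : bP ∘ₗ aP = F1 • LinearMap.id) (hP2 : aP ∘ₗ bP = F1 • LinearMap.id)
    (hQ1 : bQ ∘ₗ aQ = F2 • LinearMap.id) (hQ2 : aQ ∘ₗ bQ = F2 • LinearMap.id) :
    (∀ (u : P0 ⊗[R] Q0) (v : P1 ⊗[R] Q1),
      TensorProduct.map LinearMap.id bQ
          (TensorProduct.map LinearMap.id aQ u + TensorProduct.map bP LinearMap.id v)
        + TensorProduct.map bP LinearMap.id
          (TensorProduct.map aP LinearMap.id u - TensorProduct.map LinearMap.id bQ v)
        = (F1 + F2) • u ∧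
      TensorProduct.map aP LinearMap.id
          (TensorProduct.map LinearMap.id aQ u + TensorProduct.map bP LinearMap.id v)
        - TensorProduct.map LinearMap.id aQ
          (TensorProduct.map aP LinearMap.id u - TensorProduct.map LinearMap.id bQ v)
        = (F1 + F2) • v) ∧
    (∀ (x : P0 ⊗[R] Q1) (y : P1 ⊗[R] Q0),
      TensorProduct.map LinearMap.id aQ
          (TensorProduct.map LinearMap.id bQ x + TensorProduct.map bP LinearMap.id y)
        + TensorProduct.map bP LinearMap.id
          (TensorProduct.map aP LinearMap.id x - TensorProduct.map LinearMap.id aQ y)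
        = (F1 + F2) • x ∧
      TensorProduct.map aP LinearMap.id
          (TensorProduct.map LinearMap.id bQ x + TensorProduct.map bP LinearMap.id y)
        - TensorProduct.map LinearMap.id bQ
          (TensorProduct.map aP LinearMap.id x - TensorProduct.map LinearMap.id aQ y)
        = (F1 + F2) • y) := by
  refine ⟨fun u v => ⟨?_, ?_⟩, fun x y => ⟨?_, ?_⟩⟩ <;>
  · simp only [map_add, map_sub, ← LinearMap.comp_apply, ← TensorProduct.map_comp,
      LinearMap.id_comp, LinearMap.comp_id, hP1, hP2, hQ1, hQ2,
      TensorProduct.map_smul_right, TensorProduct.map_smul_left, TensorProduct.map_id,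
      LinearMap.smul_apply, LinearMap.id_apply, add_smul]
    abel
end

section
/- Let R be a commutative ring, F ∈ R, and let (C•) be a bounded complex of R-modules with two endomorphisms α, β of C = ⊕ Cⁿ, where α raises the degree by 1 and β lowers it by 1, satisfying α² = 0, β² = 0, and α∘β + β∘α = F·id. Suppose the complex (C•, α) is exact. If n is the smallest integer with Cⁿ ≠ 0, then α restricted to Cⁿ is injective, the submodule Cⁿ ⊕ α(Cⁿ) ⊆ C is preserved by both α and β, and the induced maps ᾱ, β̄ on the quotient C̄ = C/(Cⁿ ⊕ α(Cⁿ)) again satisfy ᾱ² = 0, β̄² = 0, ᾱβ̄ + β̄ᾱ = F·id, with (C̄•, ᾱ) exact. -/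
/-- Inductive step for an exact bounded curved Koszul-type complex:
`α` raises degree, `β` lowers degree, `α² = 0`, `β² = 0`, `α∘β + β∘α = F·id`, and `(C•, α)`
is exact.  If `n₀` is the smallest degree with `C^{n₀} ≠ 0`, then `α` is injective on
`C^{n₀}`, and on the quotient `C^{n₀+1}/α(C^{n₀})` the maps `α`, `β` descend to maps
`ᾱ`, `β̄` satisfying the same relations, with the quotient complex again exact (expressed
at the degrees where it changed). -/
theorem stmt10 {R : Type*} [CommRing R] (F : R)
    (C : ℤ → Type*) [∀ n, AddCommGroup (C n)] [∀ n, Module R (C n)]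
    (α : ∀ n : ℤ, C n →ₗ[R] C (n + 1)) (β : ∀ n : ℤ, C (n + 1) →ₗ[R] C n)
    (hbdd : ∃ Nb : ℤ, ∀ m : ℤ, Nb < m → Subsingleton (C m))
    (hα2 : ∀ n : ℤ, α (n + 1) ∘ₗ α n = 0)
    (hβ2 : ∀ n : ℤ, β n ∘ₗ β (n + 1) = 0)
    (hcurv : ∀ n : ℤ, α n ∘ₗ β n + β (n + 1) ∘ₗ α (n + 1) = F • LinearMap.id)
    (n0 : ℤ) (hmin : ∀ m : ℤ, m < n0 → Subsingleton (C m)) (hne : Nontrivial (C n0))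
    (hexact : ∀ n : ℤ, LinearMap.ker (α (n + 1)) = LinearMap.range (α n)) :
    Function.Injective (α n0) ∧
    ∃ αbar : (C (n0 + 1) ⧸ LinearMap.range (α n0)) →ₗ[R] C (n0 + 1 + 1),
      αbar ∘ₗ (LinearMap.range (α n0)).mkQ = α (n0 + 1) ∧
      α (n0 + 1 + 1) ∘ₗ αbar = 0 ∧
      ((LinearMap.range (α n0)).mkQ ∘ₗ β (n0 + 1)) ∘ₗ β (n0 + 1 + 1) = 0 ∧
      αbar ∘ₗ ((LinearMap.range (α n0)).mkQ ∘ₗ β (n0 + 1))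
          + β (n0 + 1 + 1) ∘ₗ α (n0 + 1 + 1) = F • LinearMap.id ∧
      ((LinearMap.range (α n0)).mkQ ∘ₗ β (n0 + 1)) ∘ₗ αbar = F • LinearMap.id ∧
      Function.Injective αbar ∧
      LinearMap.ker (α (n0 + 1 + 1)) = LinearMap.range αbar := by

  have hker : LinearMap.ker (α n0) = ⊥ := by
    have key : ∀ m : ℤ, m + 1 = n0 → LinearMap.ker (α n0) = ⊥ := by
      intro m hm
      subst hm
      have hs : Subsingleton (C m) := hmin _ (by omega)
      rw [hexact m]
      ext x
      simp only [LinearMap.mem_range, Submodule.mem_bot]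
      constructor
      · rintro ⟨y, rfl⟩
        rw [Subsingleton.elim y 0, map_zero]
      · rintro rfl; exact ⟨0, map_zero _⟩
    exact key (n0 - 1) (by ring)
  have hinj : Function.Injective (α n0) := by
    rw [← LinearMap.ker_eq_bot]; exact hker
  refine ⟨hinj, ?_⟩
  set K := LinearMap.range (α n0) with hK
  have hle : K ≤ LinearMap.ker (α (n0 + 1)) := (hexact n0).ge
  set αbar := Submodule.liftQ K (α (n0 + 1)) hle with hαbar
  have hfact : αbar ∘ₗ K.mkQ = α (n0 + 1) := Submodule.liftQ_mkQ K _ hle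
  have hfact' : ∀ x, αbar (K.mkQ x) = α (n0 + 1) x := fun x =>
    congrArg (fun f => f x) hfact
  have hmkQα : ∀ x, K.mkQ (α n0 x) = 0 := fun x => by
    rw [Submodule.mkQ_apply, Submodule.Quotient.mk_eq_zero]
    exact ⟨x, rfl⟩
  refine ⟨αbar, hfact, ?_, ?_, ?_, ?_, ?_, ?_⟩
  · apply Submodule.linearMap_qext
    rw [LinearMap.comp_assoc, hfact, hα2 (n0 + 1)]
    ext x; rfl
  · ext x
    have h := congrArg (fun f => f x) (hβ2 (n0 + 1))
    simp only [LinearMap.comp_apply, LinearMap.zero_apply] at h ⊢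
    rw [h, map_zero]
  · ext x
    have h := congrArg (fun f => f x) (hcurv (n0 + 1))
    simp only [LinearMap.comp_apply, LinearMap.add_apply, LinearMap.smul_apply,
      LinearMap.id_apply, LinearMap.zero_apply] at h ⊢
    rw [hfact']
    exact h
  · apply Submodule.linearMap_qext
    ext x
    have h := congrArg (fun f => f x) (hcurv n0)
    simp only [LinearMap.comp_apply, LinearMap.add_apply, LinearMap.smul_apply,
      LinearMap.id_apply] at h ⊢
    rw [hfact']
    have : β (n0 + 1) (α (n0 + 1) x) = F • x - α n0 (β n0 x) := by
      rw [← h]; abel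
    rw [this, map_sub, map_smul, hmkQα, sub_zero]
  · intro a b hab
    obtain ⟨x, rfl⟩ := K.mkQ_surjective a
    obtain ⟨y, rfl⟩ := K.mkQ_surjective b
    rw [hfact', hfact'] at hab
    have : x - y ∈ LinearMap.ker (α (n0 + 1)) := by
      rw [LinearMap.mem_ker, map_sub, hab, sub_self]
    rw [hexact n0] at this
    rw [← sub_eq_zero, ← map_sub, Submodule.mkQ_apply, Submodule.Quotient.mk_eq_zero]
    exact this
  · rw [hexact (n0 + 1)]
    ext x
    simp only [LinearMap.mem_range]
    constructor
    · rintro ⟨y, rfl⟩; exact ⟨K.mkQ y, hfact' y⟩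
    · rintro ⟨a, rfl⟩
      obtain ⟨y, rfl⟩ := K.mkQ_surjective a
      exact ⟨y, (hfact' y).symm⟩
end

section
/- Let k be a field, R = k[x, y], and F = xy. Consider the matrix factorization P of F given by P₀ = R, P₁ = R with α: P₀ → P₁ multiplication by x and β: P₁ → P₀ multiplication by y. Then the cohomology of the endomorphism complex (End_R(P), D) (with the graded commutator differential) is isomorphic to k = R/(x, y), concentrated in even degree. -/
noncomputable section

variable (k : Type*) [Field k]

/-- `R = k[x,y]`. -/
abbrev KR := MvPolynomial (Fin 2) k

/-- The differential on the even part of `End(P)` for the matrix factorization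
`(R ⇄ R, x, y)` of `xy`:  `D(f₀, f₁) = (x·(f₀ − f₁), y·(f₁ − f₀))`. -/
def Dev : (KR k × KR k) →ₗ[KR k] KR k × KR k :=
  LinearMap.prod
    ((MvPolynomial.X (0 : Fin 2) : KR k) •
      (LinearMap.fst (KR k) (KR k) (KR k) - LinearMap.snd (KR k) (KR k) (KR k)))
    ((MvPolynomial.X (1 : Fin 2) : KR k) •
      (LinearMap.snd (KR k) (KR k) (KR k) - LinearMap.fst (KR k) (KR k) (KR k)))

/-- The differential on the odd part of `End(P)`:  `D(g₀, g₁) = (y·g₀ + x·g₁, x·g₁ + y·g₀)`. -/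
def Dodd : (KR k × KR k) →ₗ[KR k] KR k × KR k :=
  LinearMap.prod
    ((MvPolynomial.X (1 : Fin 2) : KR k) • LinearMap.fst (KR k) (KR k) (KR k)
      + (MvPolynomial.X (0 : Fin 2) : KR k) • LinearMap.snd (KR k) (KR k) (KR k))
    ((MvPolynomial.X (0 : Fin 2) : KR k) • LinearMap.snd (KR k) (KR k) (KR k)
      + (MvPolynomial.X (1 : Fin 2) : KR k) • LinearMap.fst (KR k) (KR k) (KR k))

lemma aux_primeX0 : Prime (MvPolynomial.X (0 : Fin 2) : KR k) := by
  rw [← MulEquiv.prime_iff (MvPolynomial.finSuccEquiv k 1)]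
  show Prime ((MvPolynomial.finSuccEquiv k 1) (MvPolynomial.X 0))
  rw [MvPolynomial.finSuccEquiv_X_zero]
  exact Polynomial.prime_X

lemma aux_not_dvd : ¬ (MvPolynomial.X (0 : Fin 2) : KR k) ∣ MvPolynomial.X (1 : Fin 2) := by
  intro ⟨c, hc⟩
  have := congrArg (MvPolynomial.eval (fun i : Fin 2 => if i = 0 then (0:k) else 1)) hc
  simp at this

lemma aux_dev_apply (p : KR k × KR k) :
    Dev k p = (MvPolynomial.X 0 * (p.1 - p.2), MvPolynomial.X 1 * (p.2 - p.1)) := by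
  simp [Dev, smul_eq_mul]

lemma aux_dodd_apply (p : KR k × KR k) :
    Dodd k p = (MvPolynomial.X 1 * p.1 + MvPolynomial.X 0 * p.2,
                MvPolynomial.X 1 * p.1 + MvPolynomial.X 0 * p.2) := by
  simp [Dodd, smul_eq_mul]; ring

lemma aux_mem_ker_dev (p : KR k × KR k) : p ∈ LinearMap.ker (Dev k) ↔ p.2 = p.1 := by
  rw [LinearMap.mem_ker, aux_dev_apply, Prod.ext_iff]
  constructor
  · rintro ⟨h, -⟩
    have := mul_eq_zero.mp h
    rcases this with h' | h'
    · exact absurd h' (MvPolynomial.X_ne_zero 0)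
    · linear_combination -h'
  · intro h; simp [h]

lemma aux_mem_range_dodd (q : KR k × KR k) :
    q ∈ LinearMap.range (Dodd k) ↔ q.2 = q.1 ∧
      q.1 ∈ Ideal.span {(MvPolynomial.X (0 : Fin 2) : KR k), MvPolynomial.X 1} := by
  constructor
  · rintro ⟨g, rfl⟩
    rw [aux_dodd_apply]
    refine ⟨rfl, Ideal.mem_span_pair.mpr ⟨g.2, g.1, by ring⟩⟩
  · rintro ⟨h2, h1⟩
    obtain ⟨a, b, hab⟩ := Ideal.mem_span_pair.mp h1
    refine ⟨(b, a), ?_⟩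
    rw [aux_dodd_apply]
    have : MvPolynomial.X 1 * b + MvPolynomial.X 0 * a = q.1 := by linear_combination hab
    rw [this]
    exact (Prod.ext_iff.mpr ⟨rfl, h2.symm⟩)

lemma aux_ker_dodd_le (p : KR k × KR k) (hp : p ∈ LinearMap.ker (Dodd k)) :
    p ∈ LinearMap.range (Dev k) := by
  rw [LinearMap.mem_ker, aux_dodd_apply, Prod.ext_iff] at hp
  have h : MvPolynomial.X 1 * p.1 + MvPolynomial.X 0 * p.2 = 0 := hp.1
  have hdvd : (MvPolynomial.X (0 : Fin 2) : KR k) ∣ MvPolynomial.X 1 * p.1 :=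
    ⟨-p.2, by linear_combination h⟩
  obtain ⟨t, ht⟩ := ((aux_primeX0 k).dvd_mul.mp hdvd).resolve_left (aux_not_dvd k)
  have hx : (MvPolynomial.X (0 : Fin 2) : KR k) ≠ 0 := MvPolynomial.X_ne_zero 0
  have h2 : p.2 = -(MvPolynomial.X 1 * t) := by
    have : MvPolynomial.X 0 * p.2 = MvPolynomial.X 0 * (-(MvPolynomial.X 1 * t)) := by
      linear_combination h - MvPolynomial.X (1 : Fin 2) * ht
    exact mul_left_cancel₀ hx this
  refine ⟨(t, 0), ?_⟩
  rw [aux_dev_apply]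
  exact Prod.ext_iff.mpr ⟨by simpa using ht.symm, by simp [h2]⟩

/-- For `R = k[x,y]`, `F = xy` and the matrix factorization
`P = (R ⇄ R, x, y)`, the cohomology of `(End_R(P), D)` is `k = R/(x,y)`
concentrated in even degree: the even cohomology is isomorphic to `R/(x,y)`
and the odd cohomology vanishes. -/
theorem stmt11 :
    Nonempty
      ((↥(LinearMap.ker (Dev k)) ⧸
          Submodule.comap (LinearMap.ker (Dev k)).subtype (LinearMap.range (Dodd k)))
        ≃ₗ[KR k]
       (KR k ⧸ Ideal.span {(MvPolynomial.X (0 : Fin 2) : KR k), MvPolynomial.X (1 : Fin 2)})) ∧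
    Subsingleton
      (↥(LinearMap.ker (Dodd k)) ⧸
        Submodule.comap (LinearMap.ker (Dodd k)).subtype (LinearMap.range (Dev k))) := by
  set I : Ideal (KR k) :=
    Ideal.span {(MvPolynomial.X (0 : Fin 2) : KR k), MvPolynomial.X (1 : Fin 2)} with hI
  constructor
  · -- even cohomology
    set φ : ↥(LinearMap.ker (Dev k)) →ₗ[KR k] KR k ⧸ I :=
      (Submodule.mkQ I).comp ((LinearMap.fst (KR k) (KR k) (KR k)).comp
        (LinearMap.ker (Dev k)).subtype) with hφ
    have hsurj : Function.Surjective φ := by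
      intro z
      obtain ⟨r, rfl⟩ := Submodule.mkQ_surjective I z
      exact ⟨⟨(r, r), (aux_mem_ker_dev k (r, r)).mpr rfl⟩, rfl⟩
    have hker : LinearMap.ker φ
        = Submodule.comap (LinearMap.ker (Dev k)).subtype (LinearMap.range (Dodd k)) := by
      ext p
      have hp2 : (p : KR k × KR k).2 = (p : KR k × KR k).1 := (aux_mem_ker_dev k _).mp p.2
      simp only [Submodule.mem_comap, aux_mem_range_dodd, LinearMap.mem_ker, hφ,
        LinearMap.comp_apply, Submodule.subtype_apply, LinearMap.fst_apply,
        Submodule.mkQ_apply, Submodule.Quotient.mk_eq_zero]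
      exact ⟨fun h => ⟨hp2, h⟩, fun h => h.2⟩
    exact ⟨(Submodule.quotEquivOfEq _ _ hker.symm).trans
      ((φ.quotKerEquivRange).trans (LinearEquiv.ofTop _ (LinearMap.range_eq_top.mpr hsurj)))⟩
  · -- odd cohomology vanishes
    have : Submodule.comap (LinearMap.ker (Dodd k)).subtype (LinearMap.range (Dev k)) = ⊤ := by
      rw [Submodule.comap_subtype_eq_top]
      intro p hp
      exact aux_ker_dodd_le k p hp
    rw [this]
    exact Submodule.Quotient.subsingleton_iff.mpr rfl

end
end
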